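/- Let T : (Ω, ℋ) → (Ω_T, ℋ_T) be measurable and suppose: (a) P[A₁ | σ(T)] = P[A₁ | ℋ] and Q[A₁ | σ(T)] = Q[A₁ | ℋ], and (b) P[A_i ∩ {T ∈ M}] = Q[A_i ∩ {T ∈ M}] for i ∈ {0,1} and all M ∈ ℋ_T. Then P and Q are related by covariate shift with respect to ℋ, i.e. P[A₁ | ℋ] = Q[A₁ | ℋ] (there is a common ℋ-measurable version). -/

import Mathlib

open MeasureTheory Set

/-- `Ψ` is an `m`-measurable version of the conditional probability of `A` given `m` under `P`
(a measure on the ambient σ-algebra `mΩ`): for every `m`-measurable `H`,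
`P (A ∩ H) = ∫_H Ψ dP`. -/
def IsCondVersion {Ω : Type*} [mΩ : MeasurableSpace Ω] (m : MeasurableSpace Ω)
    (P : @Measure Ω mΩ) (A : Set Ω) (Ψ : Ω → ℝ) : Prop :=
  Measurable[m] Ψ ∧
  ∀ H : Set Ω, MeasurableSet[m] H → (P (A ∩ H)).toReal = ∫ ω in H, Ψ ω ∂P

/-- `P` and `Q` are related by covariate shift w.r.t. the sub-σ-algebra `m`: there is a common
`m`-measurable `[0,1]`-valued version `Ψ` of the conditional probability of `A` given `m`. -/
def CovShift {Ω : Type*} [mΩ : MeasurableSpace Ω] (m : MeasurableSpace Ω)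
    (P Q : @Measure Ω mΩ) (A : Set Ω) : Prop :=
  ∃ Ψ : Ω → ℝ, (∀ ω, Ψ ω ∈ Set.Icc (0 : ℝ) 1) ∧
    @IsCondVersion Ω mΩ m P A Ψ ∧ @IsCondVersion Ω mΩ m Q A Ψ

/-- Observation of He et al.: if (a) `P[A₁ | σ(T)] = P[A₁ | ℋ]` and `Q[A₁ | σ(T)] = Q[A₁ | ℋ]`
(common versions exist), and (b) `P[Aᵢ ∩ {T ∈ M}] = Q[Aᵢ ∩ {T ∈ M}]` for `i ∈ {0,1}` and all
measurable `M`, then `P` and `Q` are related by covariate shift w.r.t. `ℋ`. -/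
theorem stmt14 {Ω : Type} [mΩ : MeasurableSpace Ω] {m : MeasurableSpace Ω} (hm : m ≤ mΩ)
    {ΩT : Type} [mT : MeasurableSpace ΩT] (T : Ω → ΩT) (hT : @Measurable Ω ΩT m mT T)
    (A₁ : Set Ω) (hA₁ : MeasurableSet[mΩ] A₁)
    (P Q : @Measure Ω mΩ) (hP : @IsProbabilityMeasure Ω mΩ P)
    (hQ : @IsProbabilityMeasure Ω mΩ Q)
    (ha : ∃ ΦP : Ω → ℝ, (∀ ω, ΦP ω ∈ Set.Icc (0 : ℝ) 1) ∧
      @IsCondVersion Ω mΩ (mT.comap T) P A₁ ΦP ∧ @IsCondVersion Ω mΩ m P A₁ ΦP)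
    (ha' : ∃ ΦQ : Ω → ℝ, (∀ ω, ΦQ ω ∈ Set.Icc (0 : ℝ) 1) ∧
      @IsCondVersion Ω mΩ (mT.comap T) Q A₁ ΦQ ∧ @IsCondVersion Ω mΩ m Q A₁ ΦQ)
    (hb : ∀ M : Set ΩT, MeasurableSet[mT] M →
      P (A₁ ∩ T ⁻¹' M) = Q (A₁ ∩ T ⁻¹' M) ∧ P (A₁ᶜ ∩ T ⁻¹' M) = Q (A₁ᶜ ∩ T ⁻¹' M)) :
    @CovShift Ω mΩ m P Q A₁ := by
  obtain ⟨ΦP, hΦP01, ⟨hPσ, hPσv⟩, ⟨hPm, hPmv⟩⟩ := ha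
  obtain ⟨ΦQ, hΦQ01, ⟨hQσ, hQσv⟩, ⟨hQm, hQmv⟩⟩ := ha'
  have hσm : (mT.comap T) ≤ m := measurable_iff_comap_le.mp hT
  have hσ : (mT.comap T) ≤ mΩ := hσm.trans hm
  -- P and Q agree on (mT.comap T)-measurable sets
  have hPQσ : ∀ s : Set Ω, MeasurableSet[(mT.comap T)] s → P s = Q s := by
    rintro s ⟨M, hM, rfl⟩
    have hdisj : Disjoint (A₁ ∩ T ⁻¹' M) (A₁ᶜ ∩ T ⁻¹' M) :=
      disjoint_compl_right.mono inter_subset_left inter_subset_left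
    have hcup : A₁ ∩ T ⁻¹' M ∪ A₁ᶜ ∩ T ⁻¹' M = T ⁻¹' M := by
      rw [← union_inter_distrib_right, union_compl_self, univ_inter]
    have hmeas : MeasurableSet[mΩ] (A₁ᶜ ∩ T ⁻¹' M) :=
      hA₁.compl.inter (hσ _ ⟨M, hM, rfl⟩)
    obtain ⟨h1, h2⟩ := hb M hM
    have huP : P (A₁ ∩ T ⁻¹' M ∪ A₁ᶜ ∩ T ⁻¹' M) = P (A₁ ∩ T ⁻¹' M) + P (A₁ᶜ ∩ T ⁻¹' M) :=
      measure_union hdisj hmeas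
    have huQ : Q (A₁ ∩ T ⁻¹' M ∪ A₁ᶜ ∩ T ⁻¹' M) = Q (A₁ ∩ T ⁻¹' M) + Q (A₁ᶜ ∩ T ⁻¹' M) :=
      measure_union hdisj hmeas
    rw [hcup] at huP huQ
    rw [huP, huQ, h1, h2]
  have htrim : P.trim hσ = Q.trim hσ :=
    @Measure.ext Ω (mT.comap T) _ _ fun s hs => by
      rw [trim_measurableSet_eq hσ hs, trim_measurableSet_eq hσ hs, hPQσ s hs]
  -- transfer of integrals of (mT.comap T)-strongly-measurable functions
  have hint : ∀ f : Ω → ℝ, StronglyMeasurable[(mT.comap T)] f → ∫ x, f x ∂P = ∫ x, f x ∂Q := by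
    intro f hf
    rw [integral_trim hσ hf, integral_trim hσ hf, htrim]
  have hsetint : ∀ s : Set Ω, MeasurableSet[(mT.comap T)] s →
      ∫ x in s, ΦP x ∂P = ∫ x in s, ΦP x ∂Q := by
    intro s hs
    rw [integral_trim hσ hPσ.stronglyMeasurable, integral_trim hσ hPσ.stronglyMeasurable,
      ← restrict_trim hσ P hs, ← restrict_trim hσ Q hs, htrim]
  -- integrability facts
  have hΦPmeas : Measurable[mΩ] ΦP := hPσ.mono hσ le_rfl
  have hΦQmeas : Measurable[mΩ] ΦQ := hQσ.mono hσ le_rfl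
  have hbound : ∀ (Φ : Ω → ℝ), (∀ ω, Φ ω ∈ Set.Icc (0 : ℝ) 1) → Measurable[mΩ] Φ →
      Integrable Φ Q := by
    intro Φ h01 hmeas
    refine (integrable_const (1 : ℝ)).mono' hmeas.aestronglyMeasurable ?_
    filter_upwards with ω
    rw [Real.norm_eq_abs, abs_le]
    exact ⟨le_trans (by norm_num) (h01 ω).1, (h01 ω).2⟩
  have hΦPint : Integrable ΦP Q := hbound ΦP hΦP01 hΦPmeas
  have hΦQint : Integrable ΦQ Q := hbound ΦQ hΦQ01 hΦQmeas
  -- ΦP =ᵐ[Q] ΦQ via uniqueness of conditional expectation on (mT.comap T)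
  have hfin : IsFiniteMeasure (Q.trim hσ) :=
    ⟨by rw [trim_measurableSet_eq hσ (@MeasurableSet.univ Ω (mT.comap T))]; exact measure_lt_top Q _⟩
  haveI hsf : SigmaFinite (Q.trim hσ) := @IsFiniteMeasure.toSigmaFinite _ (mT.comap T) _ hfin
  have hfg : ∀ s : Set Ω, MeasurableSet[mT.comap T] s → Q s < ⊤ →
      ∫ x in s, ΦP x ∂Q = ∫ x in s, ΦQ x ∂Q := by
    rintro s ⟨M, hM, rfl⟩ -
    calc ∫ x in T ⁻¹' M, ΦP x ∂Q = ∫ x in T ⁻¹' M, ΦP x ∂P := (hsetint _ ⟨M, hM, rfl⟩).symm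
      _ = (P (A₁ ∩ T ⁻¹' M)).toReal := (hPσv _ ⟨M, hM, rfl⟩).symm
      _ = (Q (A₁ ∩ T ⁻¹' M)).toReal := by rw [(hb M hM).1]
      _ = ∫ x in T ⁻¹' M, ΦQ x ∂Q := hQσv _ ⟨M, hM, rfl⟩
  have heq : ΦP =ᵐ[Q] ΦQ :=
    ae_eq_of_forall_setIntegral_eq_of_sigmaFinite' (m := mT.comap T)
      hσ (fun s _ _ => hΦPint.integrableOn)
      (fun s _ _ => hΦQint.integrableOn) hfg
      (StronglyMeasurable.aestronglyMeasurable hPσ.stronglyMeasurable)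
      (StronglyMeasurable.aestronglyMeasurable hQσ.stronglyMeasurable)
  refine ⟨ΦP, hΦP01, ⟨hPm, hPmv⟩, hPm, fun H hH => ?_⟩
  calc (Q (A₁ ∩ H)).toReal = ∫ ω in H, ΦQ ω ∂Q := hQmv H hH
    _ = ∫ ω in H, ΦP ω ∂Q := integral_congr_ae (ae_restrict_of_ae heq.symm)
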